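/- Let t ≥ 1 and let G be an m-vertex graph with no K_t-subdivision and minimum degree at least (9/10)m. Then G is (1 - m/(2t^2), (20/11)t)-locally sparse, i.e., every vertex subset X with |X| ≥ (20/11)t contains a vertex whose degree in G[X] is at most (1 - m/(2t^2))|X|. -/

import Mathlib

/-- `G` contains a subdivision of `H`: an injective map of branch vertices together with
internally vertex-disjoint paths (whose internal vertices avoid branch vertices)
for each edge of `H`. -/
def ContainsSubdivision {V : Type*} {W : Type*} (G : SimpleGraph V) (H : SimpleGraph W) : Prop :=
  ∃ (f : W → V) (p : ∀ ⦃u v : W⦄, H.Adj u v → G.Walk (f u) (f v)),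
    Function.Injective f ∧
    (∀ (u v : W) (h : H.Adj u v), (p h).IsPath) ∧
    (∀ (u v : W) (h : H.Adj u v), ∀ x ∈ (p h).support.tail.dropLast, x ∉ Set.range f) ∧
    (∀ (u v u' v' : W) (h : H.Adj u v) (h' : H.Adj u' v'), s(u, v) ≠ s(u', v') →
      ∀ x ∈ (p h).support.tail.dropLast, x ∉ (p h').support.tail.dropLast)

set_option linter.unusedSectionVars false
set_option maxHeartbeats 1000000

section Aux
open Finset

variable {V : Type*} [Fintype V] [DecidableEq V] (G : SimpleGraph V) [DecidableRel G.Adj]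

/-- ordered non-adjacent distinct pairs inside `Y` -/
private def NP (Y : Finset V) : Finset (V × V) :=
  (Y ×ˢ Y).filter fun p => p.1 ≠ p.2 ∧ ¬ G.Adj p.1 p.2

private lemma mem_NP {Y : Finset V} {p : V × V} :
    p ∈ NP G Y ↔ p.1 ∈ Y ∧ p.2 ∈ Y ∧ p.1 ≠ p.2 ∧ ¬ G.Adj p.1 p.2 := by
  simp [NP, Finset.mem_filter, Finset.mem_product, and_assoc]

/-- non-neighbors of `v` inside `Y` -/
private def nd (Y : Finset V) (v : V) : ℕ :=
  (Y.filter fun u => v ≠ u ∧ ¬ G.Adj v u).card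

private lemma NP_card_sum (Y : Finset V) : (NP G Y).card = ∑ v ∈ Y, nd G Y v := by
  rw [Finset.card_eq_sum_card_fiberwise (f := Prod.fst) (t := Y)
    (fun p hp => ((mem_NP G).1 hp).1)]
  refine Finset.sum_congr rfl fun v hv => ?_
  have h : (NP G Y).filter (fun p => p.1 = v)
      = (Y.filter fun u => v ≠ u ∧ ¬ G.Adj v u).image (fun u => (v, u)) := by
    ext ⟨a, b⟩
    simp only [mem_filter, mem_NP, mem_image, Prod.mk.injEq]
    constructor
    · rintro ⟨⟨ha, hb, hne, hadj⟩, rfl⟩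
      exact ⟨b, ⟨hb, hne, hadj⟩, rfl, rfl⟩
    · rintro ⟨u, ⟨hu, hne, hadj⟩, rfl, rfl⟩
      exact ⟨⟨hv, hu, hne, hadj⟩, rfl⟩
  rw [h, Finset.card_image_of_injective _ (fun a b hab => by simpa using hab), nd]

private lemma nd_eq {Y : Finset V} {v : V} (hv : v ∈ Y) :
    nd G Y v = Y.card - 1 - (Y.filter fun u => G.Adj v u).card := by
  have h1 : (Y.erase v).filter (fun u => G.Adj v u) = Y.filter (fun u => G.Adj v u) := by
    ext u
    simp only [mem_filter, mem_erase]
    constructor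
    · rintro ⟨⟨_, hu⟩, ha⟩; exact ⟨hu, ha⟩
    · rintro ⟨hu, ha⟩; exact ⟨⟨fun h => by subst h; exact (G.irrefl ha), hu⟩, ha⟩
  have h2 : (Y.erase v).filter (fun u => ¬ G.Adj v u) = Y.filter (fun u => v ≠ u ∧ ¬ G.Adj v u) := by
    ext u
    simp only [mem_filter, mem_erase]
    constructor
    · rintro ⟨⟨hne, hu⟩, ha⟩; exact ⟨hu, Ne.symm hne, ha⟩
    · rintro ⟨hu, hne, ha⟩; exact ⟨⟨Ne.symm hne, hu⟩, ha⟩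
  have h3 := Finset.card_filter_add_card_filter_not
    (s := Y.erase v) (p := fun u => G.Adj v u)
  rw [h1, h2, Finset.card_erase_of_mem hv] at h3
  rw [nd]
  omega

private lemma erase_NP {Y : Finset V} {v : V} (hv : v ∈ Y) :
    (NP G (Y.erase v)).card + 2 * nd G Y v ≤ (NP G Y).card := by
  classical
  set D := Y.filter fun u => v ≠ u ∧ ¬ G.Adj v u with hD
  set B1 := D.image (fun u => (v, u)) with hB1
  set B2 := D.image (fun u => (u, v)) with hB2
  have hB1card : B1.card = nd G Y v :=
    Finset.card_image_of_injective _ (fun a b hab => by simpa using hab)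
  have hB2card : B2.card = nd G Y v :=
    Finset.card_image_of_injective _ (fun a b hab => by simpa using hab)
  have hsub : NP G (Y.erase v) ∪ B1 ∪ B2 ⊆ NP G Y := by
    intro p hp
    rcases Finset.mem_union.1 hp with hp | hp
    · rcases Finset.mem_union.1 hp with hp | hp
      · rw [mem_NP] at hp ⊢
        exact ⟨Finset.mem_of_mem_erase hp.1, Finset.mem_of_mem_erase hp.2.1, hp.2.2⟩
      · rcases Finset.mem_image.1 hp with ⟨u, hu, rfl⟩
        rw [hD, mem_filter] at hu
        exact (mem_NP G).2 ⟨hv, hu.1, hu.2.1, hu.2.2⟩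
    · rcases Finset.mem_image.1 hp with ⟨u, hu, rfl⟩
      rw [hD, mem_filter] at hu
      refine (mem_NP G).2 ⟨hu.1, hv, (Ne.symm hu.2.1), fun h => hu.2.2 h.symm⟩
  have hd1 : Disjoint (NP G (Y.erase v)) B1 := by
    rw [Finset.disjoint_left]
    rintro p hp hp1
    rcases Finset.mem_image.1 hp1 with ⟨u, _, rfl⟩
    exact (Finset.mem_erase.1 ((mem_NP G).1 hp).1).1 rfl
  have hd2 : Disjoint (NP G (Y.erase v) ∪ B1) B2 := by
    rw [Finset.disjoint_left]
    rintro p hp hp2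
    rcases Finset.mem_image.1 hp2 with ⟨u, hu, rfl⟩
    rcases Finset.mem_union.1 hp with hp | hp
    · exact (Finset.mem_erase.1 ((mem_NP G).1 hp).2.1).1 rfl
    · rcases Finset.mem_image.1 hp with ⟨u', hu', he⟩
      rw [hD, mem_filter] at hu'
      exact hu'.2.1 ((Prod.ext_iff.1 he).2).symm
  calc (NP G (Y.erase v)).card + 2 * nd G Y v
      = (NP G (Y.erase v) ∪ B1 ∪ B2).card := by
        rw [Finset.card_union_of_disjoint hd2, Finset.card_union_of_disjoint hd1,
          hB1card, hB2card]; ring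
    _ ≤ (NP G Y).card := Finset.card_le_card hsub

private lemma NP_card_le (Y : Finset V) : (NP G Y).card ≤ Y.card * Y.card - Y.card := by
  rw [← Finset.offDiag_card]
  exact Finset.card_le_card fun p hp => by
    rw [mem_NP] at hp; exact Finset.mem_offDiag.2 ⟨hp.1, hp.2.1, hp.2.2.1⟩

/-- averaging by iterated deletion of a max-nondegree vertex -/
private lemma exists_good_subset (t : ℕ) (ht : 1 ≤ t) :
    ∀ n (Y : Finset V), Y.card = n → t ≤ n →
      ∃ S ⊆ Y, S.card = t ∧
        (NP G S).card * (n * (n - 1)) ≤ (NP G Y).card * (t * (t - 1)) := by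
  intro n
  induction n using Nat.strong_induction_on with
  | _ n IH =>
    intro Y hYn htn
    rcases eq_or_lt_of_le htn with heq | hlt
    · refine ⟨Y, Finset.Subset.refl _, by omega, ?_⟩
      rw [heq]
    · rcases eq_or_lt_of_le ht with ht1 | ht2
      · obtain ⟨S, hSY, hScard⟩ := Y.exists_subset_card_eq (show t ≤ Y.card by omega)
        refine ⟨S, hSY, hScard, ?_⟩
        have hz : (NP G S).card = 0 := Finset.card_eq_zero.2 (Finset.eq_empty_of_forall_notMem
          fun p hp => by
            rw [mem_NP] at hp
            exact hp.2.2.1 (Finset.card_le_one.1 (by omega) _ hp.1 _ hp.2.1))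
        rw [hz]
        simp
      · have hn3 : 3 ≤ n := by omega
        have hYne : Y.Nonempty := Finset.card_pos.1 (by omega)
        obtain ⟨v, hv, hmax⟩ := Finset.exists_max_image Y (nd G Y) hYne
        have hsum : (NP G Y).card ≤ n * nd G Y v := by
          rw [NP_card_sum]
          simpa [hYn] using Finset.sum_le_card_nsmul Y (nd G Y) (nd G Y v) hmax
        have hdel := erase_NP G hv
        have hYe : (Y.erase v).card = n - 1 := by rw [Finset.card_erase_of_mem hv, hYn]
        obtain ⟨S, hSY, hScard, hS⟩ := IH (n-1) (by omega) (Y.erase v) hYe (by omega)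
        refine ⟨S, hSY.trans (Finset.erase_subset _ _), hScard, ?_⟩
        obtain ⟨k, rfl⟩ : ∃ k, n = k + 3 := ⟨n - 3, by omega⟩
        set a := (NP G S).card
        set b' := (NP G (Y.erase v)).card
        set b := (NP G Y).card
        set d := nd G Y v
        have h1 : (k+3) * b' ≤ (k+1) * b := by
          have h2 : (k+3) * b' + 2 * b ≤ (k+3) * b := by
            calc (k+3) * b' + 2 * b ≤ (k+3) * b' + 2 * ((k+3) * d) := by
                  have : b ≤ (k+3) * d := by simpa using hsum
                  omega
              _ = (k+3) * (b' + 2 * d) := by ring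
              _ ≤ (k+3) * b := Nat.mul_le_mul_left _ hdel
          have h3 : (k+3) * b = (k+1) * b + 2 * b := by ring
          omega
        have h4 : a * ((k+3) * (k+3-1)) * (k+1) ≤ b * (t * (t-1)) * (k+1) := by
          have hq : (k+3) - 1 = k + 2 := by omega
          rw [hq]
          calc a * ((k+3)*(k+2)) * (k+1) = (a * ((k+2)*(k+1))) * (k+3) := by ring
            _ ≤ (b' * (t*(t-1))) * (k+3) := Nat.mul_le_mul_right _ (by
                have hq2 : (k+3-1-1) = k + 1 := by omega
                have hq3 : (k+3-1) = k + 2 := by omega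
                simpa [hq2, hq3] using hS)
            _ = ((k+3) * b') * (t*(t-1)) := by ring
            _ ≤ ((k+1) * b) * (t*(t-1)) := Nat.mul_le_mul_right _ h1
            _ = b * (t*(t-1)) * (k+1) := by ring
        exact Nat.le_of_mul_le_mul_right h4 (by omega)

/-- common neighborhood -/
private def CN (u v : V) : Finset V := Finset.univ.filter fun w => G.Adj u w ∧ G.Adj v w

private lemma exists_midpoints {t : ℕ} (f : Fin t → V) (A : Finset (Fin t × Fin t))
    (hbig : ∀ p ∈ A, t + A.card ≤ (CN G (f p.1) (f p.2)).card) :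
    ∀ B ⊆ A, ∃ w : Fin t × Fin t → V,
      (∀ p ∈ B, G.Adj (f p.1) (w p) ∧ G.Adj (f p.2) (w p) ∧ ∀ i, w p ≠ f i) ∧
      (∀ p ∈ B, ∀ q ∈ B, w p = w q → p = q) := by
  intro B
  induction B using Finset.induction_on with
  | empty =>
    intro _
    exact ⟨fun p => f p.1, fun p hp => absurd hp (Finset.notMem_empty p),
      fun p hp => absurd hp (Finset.notMem_empty p)⟩
  | @insert a B ha IHB =>
    intro hsub
    obtain ⟨w, hw1, hw2⟩ := IHB (fun p hp => hsub (Finset.mem_insert_of_mem hp))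
    have haA : a ∈ A := hsub (Finset.mem_insert_self a B)
    have hBA : B.card + 1 ≤ A.card := by
      have : (insert a B).card ≤ A.card := Finset.card_le_card hsub
      rwa [Finset.card_insert_of_notMem ha] at this
    set F : Finset V := (Finset.univ.image f) ∪ B.image w with hF
    have hFcard : F.card ≤ t + B.card := by
      calc F.card ≤ (Finset.univ.image f).card + (B.image w).card := Finset.card_union_le _ _
        _ ≤ t + B.card := by
            gcongr
            · simpa using Finset.card_image_le (s := (Finset.univ : Finset (Fin t))) (f := f)
            · exact Finset.card_image_le
    have hne : (CN G (f a.1) (f a.2) \ F).Nonempty := by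
      rw [← Finset.card_pos]
      have h1 := Finset.card_le_card_sdiff_add_card (s := CN G (f a.1) (f a.2)) (t := F)
      have h2 := hbig a haA
      omega
    obtain ⟨c, hc⟩ := hne
    rw [Finset.mem_sdiff] at hc
    obtain ⟨hcCN, hcF⟩ := hc
    rw [CN, Finset.mem_filter] at hcCN
    have hcf : ∀ i, c ≠ f i := fun i hci => hcF (Finset.mem_union_left _
      (Finset.mem_image.2 ⟨i, Finset.mem_univ i, hci.symm⟩))
    have hcw : ∀ p ∈ B, c ≠ w p := fun p hp hcp => hcF (Finset.mem_union_right _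
      (Finset.mem_image.2 ⟨p, hp, hcp.symm⟩))
    refine ⟨Function.update w a c, ?_, ?_⟩
    · intro p hp
      by_cases hpa : p = a
      · rw [hpa, Function.update_self]
        exact ⟨hcCN.2.1, hcCN.2.2, hcf⟩
      · rw [Function.update_of_ne hpa]
        exact hw1 p ((Finset.mem_insert.1 hp).resolve_left hpa)
    · intro p hp q hq h
      by_cases hpa : p = a <;> by_cases hqa : q = a
      · rw [hpa, hqa]
      · have hqB : q ∈ B := (Finset.mem_insert.1 hq).resolve_left hqa
        rw [hpa, Function.update_self, Function.update_of_ne hqa] at h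
        exact absurd h (hcw q hqB)
      · have hpB : p ∈ B := (Finset.mem_insert.1 hp).resolve_left hpa
        rw [hqa, Function.update_of_ne hpa, Function.update_self] at h
        exact absurd h.symm (hcw p hpB)
      · rw [Function.update_of_ne hpa, Function.update_of_ne hqa] at h
        exact hw2 p ((Finset.mem_insert.1 hp).resolve_left hpa)
          q ((Finset.mem_insert.1 hq).resolve_left hqa) h

end Aux
section Main
open Finset

variable {V : Type*} [Fintype V] [DecidableEq V] (G : SimpleGraph V) [DecidableRel G.Adj]

private lemma contains_subdivision_of_S {t : ℕ} (S : Finset V) (hS : S.card = t)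
    (hbig : ∀ u v : V, u ∈ S → v ∈ S → u ≠ v → ¬ G.Adj u v →
      2 * t + (NP G S).card < 2 * (CN G u v).card) :
    ContainsSubdivision G (⊤ : SimpleGraph (Fin t)) := by
  classical
  set e := S.equivFinOfCardEq hS with he
  set f : Fin t → V := fun i => ((e.symm i : S) : V) with hfdef
  have hf : Function.Injective f := fun a b hab => by
    have := Subtype.coe_injective hab
    exact e.symm.injective this
  have hfS : ∀ i, f i ∈ S := fun i => (e.symm i).2
  set A : Finset (Fin t × Fin t) :=
    Finset.univ.filter fun p : Fin t × Fin t => p.1 < p.2 ∧ ¬ G.Adj (f p.1) (f p.2) with hA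
  have hmemA : ∀ p : Fin t × Fin t, p ∈ A ↔ p.1 < p.2 ∧ ¬ G.Adj (f p.1) (f p.2) := by
    intro p; simp [hA]
  have h2A : 2 * A.card ≤ (NP G S).card := by
    set g1 : Fin t × Fin t → V × V := fun p => (f p.1, f p.2)
    set g2 : Fin t × Fin t → V × V := fun p => (f p.2, f p.1)
    have hg1 : Function.Injective g1 := fun a b hab => by
      obtain ⟨h1, h2⟩ := Prod.ext_iff.1 hab
      exact Prod.ext (hf h1) (hf h2)
    have hg2 : Function.Injective g2 := fun a b hab => by
      obtain ⟨h1, h2⟩ := Prod.ext_iff.1 hab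
      exact Prod.ext (hf h2) (hf h1)
    have hsub : A.image g1 ∪ A.image g2 ⊆ NP G S := by
      intro q hq
      rcases Finset.mem_union.1 hq with hq | hq <;>
        obtain ⟨p, hp, rfl⟩ := Finset.mem_image.1 hq <;>
        rw [hmemA] at hp
      · exact (mem_NP G).2 ⟨hfS _, hfS _, fun h => (hp.1.ne (hf h)), hp.2⟩
      · exact (mem_NP G).2 ⟨hfS _, hfS _, fun h => (hp.1.ne (hf h.symm)),
          fun h => hp.2 h.symm⟩
    have hdisj : Disjoint (A.image g1) (A.image g2) := by
      rw [Finset.disjoint_left]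
      rintro q hq1 hq2
      obtain ⟨p, hp, rfl⟩ := Finset.mem_image.1 hq1
      obtain ⟨p', hp', heq⟩ := Finset.mem_image.1 hq2
      rw [hmemA] at hp hp'
      obtain ⟨h1, h2⟩ := Prod.ext_iff.1 heq
      have e1 : p'.2 = p.1 := hf h1
      have e2 : p'.1 = p.2 := hf h2
      have hlt := hp'.1
      rw [e1, e2] at hlt
      exact absurd hp.1 (asymm hlt)
    calc 2 * A.card = (A.image g1).card + (A.image g2).card := by
          rw [Finset.card_image_of_injective _ hg1, Finset.card_image_of_injective _ hg2]; ring
      _ = (A.image g1 ∪ A.image g2).card := (Finset.card_union_of_disjoint hdisj).symm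
      _ ≤ (NP G S).card := Finset.card_le_card hsub
  have hbig' : ∀ p ∈ A, t + A.card ≤ (CN G (f p.1) (f p.2)).card := by
    intro p hp
    rw [hmemA] at hp
    have := hbig (f p.1) (f p.2) (hfS _) (hfS _) (fun h => hp.1.ne (hf h)) hp.2
    omega
  obtain ⟨w, hw1, hw2⟩ := exists_midpoints G f A hbig' A (Finset.Subset.refl A)
  set key : Fin t → Fin t → Fin t × Fin t := fun i j => if i < j then (i, j) else (j, i)
    with hkeydef
  have hkeyA : ∀ i j : Fin t, i ≠ j → ¬ G.Adj (f i) (f j) → key i j ∈ A := by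
    intro i j hij hadj
    rcases lt_or_gt_of_ne hij with h | h
    · rw [hkeydef]; simp only [if_pos h]; rw [hmemA]; exact ⟨h, hadj⟩
    · rw [hkeydef]; simp only [if_neg (not_lt_of_gt h)]; rw [hmemA]
      exact ⟨h, fun ha => hadj ha.symm⟩
  have hkadj : ∀ i j : Fin t, (hij : i ≠ j) → (hadj : ¬ G.Adj (f i) (f j)) →
      G.Adj (f i) (w (key i j)) ∧ G.Adj (f j) (w (key i j)) := by
    intro i j hij hadj
    have hk := hkeyA i j hij hadj
    have h1 := hw1 _ hk
    rcases lt_or_gt_of_ne hij with h | h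
    · rw [hkeydef] at h1 ⊢
      simp only [if_pos h] at h1 ⊢
      exact ⟨h1.1, h1.2.1⟩
    · rw [hkeydef] at h1 ⊢
      simp only [if_neg (not_lt_of_gt h)] at h1 ⊢
      exact ⟨h1.2.1, h1.1⟩
  have hksym : ∀ i j : Fin t, s((key i j).1, (key i j).2) = s(i, j) := by
    intro i j
    rw [hkeydef]
    by_cases h : i < j
    · simp [if_pos h]
    · simp only [if_neg h]
      exact Sym2.eq_swap
  refine ⟨f, fun i j h =>
    if hadj : G.Adj (f i) (f j) then SimpleGraph.Walk.cons hadj SimpleGraph.Walk.nil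
    else SimpleGraph.Walk.cons (hkadj i j h.ne hadj).1
      (SimpleGraph.Walk.cons ((hkadj i j h.ne hadj).2).symm SimpleGraph.Walk.nil),
    hf, ?_, ?_, ?_⟩
  · intro u v h
    by_cases hadj : G.Adj (f u) (f v)
    · simp only [dif_pos hadj]
      simp [SimpleGraph.Walk.isPath_def, hadj.ne]
    · simp only [dif_neg hadj]
      have h1 := (hkadj u v h.ne hadj).1
      have h2 := (hkadj u v h.ne hadj).2
      simp [SimpleGraph.Walk.isPath_def, h1.ne', h2.ne', hf.ne h.ne, Ne.symm (h1.ne')]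
  · intro u v h x hx
    by_cases hadj : G.Adj (f u) (f v)
    · simp only [dif_pos hadj] at hx
      simp [SimpleGraph.Walk.support_cons] at hx
    · simp only [dif_neg hadj] at hx
      simp [SimpleGraph.Walk.support_cons] at hx
      subst hx
      rintro ⟨i, hi⟩
      exact (hw1 _ (hkeyA u v h.ne hadj)).2.2 i hi.symm
  · intro u v u' v' h h' hne x hx hx'
    by_cases hadj : G.Adj (f u) (f v)
    · simp only [dif_pos hadj] at hx
      simp [SimpleGraph.Walk.support_cons] at hx
    · by_cases hadj' : G.Adj (f u') (f v')
      · simp only [dif_pos hadj'] at hx'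
        simp [SimpleGraph.Walk.support_cons] at hx'
      · simp only [dif_neg hadj] at hx
        simp only [dif_neg hadj'] at hx'
        simp [SimpleGraph.Walk.support_cons] at hx hx'
        subst hx
        have heq := hw2 _ (hkeyA u v h.ne hadj) _ (hkeyA u' v' h'.ne hadj') hx'
        apply hne
        rw [← hksym u v, ← hksym u' v', heq]

end Main
theorem locally_sparse_of_min_degree_no_subdivision {V : Type*} [Fintype V] [DecidableEq V]
    (G : SimpleGraph V) [DecidableRel G.Adj] {t m : ℕ} (ht : 1 ≤ t)
    (hm : Fintype.card V = m)
    (hsub : ¬ ContainsSubdivision G (⊤ : SimpleGraph (Fin t)))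
    (hdeg : ∀ v : V, (9 : ℝ) / 10 * m ≤ G.degree v) :
    ∀ X : Finset V, (20 : ℝ) / 11 * t ≤ X.card →
      ∃ v ∈ X, ((X.filter (fun u => G.Adj v u)).card : ℝ) ≤
        (1 - m / (2 * t ^ 2)) * X.card := by
  intro X hX
  by_contra hcon
  push_neg at hcon
  have hmuniv : (Finset.univ : Finset V).card = m := by rw [Finset.card_univ, hm]
  have hnm : X.card ≤ m := hmuniv ▸ Finset.card_le_univ X
  have ht0 : (1 : ℝ) ≤ t := by exact_mod_cast ht
  have htpos : (0 : ℝ) < t := by linarith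
  have hn1 : (1 : ℝ) < X.card := lt_of_lt_of_le (by nlinarith) hX
  have hn2 : 2 ≤ X.card := by
    have h : (1 : ℕ) < X.card := by exact_mod_cast hn1
    omega
  have htn : t ≤ X.card := by
    have h : (t : ℝ) ≤ X.card := le_trans (by nlinarith) hX
    exact_mod_cast h
  have hmpos : (0 : ℝ) < m := by
    have : (2:ℝ) ≤ X.card := by exact_mod_cast hn2
    have : (X.card : ℝ) ≤ m := by exact_mod_cast hnm
    linarith
  have hXne : X.Nonempty := Finset.card_pos.1 (by omega)
  obtain ⟨S, hSX, hScard, havg⟩ := exists_good_subset G t ht X.card X rfl htn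
  -- real version of the averaging inequality
  have havgR : ((NP G S).card : ℝ) * ((X.card : ℝ) * ((X.card : ℝ) - 1))
      ≤ ((NP G X).card : ℝ) * ((t : ℝ) * ((t : ℝ) - 1)) := by
    have h := (Nat.cast_le (α := ℝ)).2 havg
    push_cast [Nat.cast_sub (show 1 ≤ X.card by omega), Nat.cast_sub ht] at h
    convert h using 2
  -- bound on non-degrees in X
  have hndlt : ∀ v ∈ X, (nd G X v : ℝ) < (m : ℝ) / (2 * (t:ℝ) ^ 2) * X.card - 1 := by
    intro v hv
    have hde := nd_eq G hv
    have hfsub : (X.filter fun u => G.Adj v u) ⊆ X.erase v := by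
      intro u hu
      rw [Finset.mem_filter] at hu
      exact Finset.mem_erase.2 ⟨fun h => G.irrefl (h ▸ hu.2), hu.1⟩
    have hdle : (X.filter fun u => G.Adj v u).card ≤ X.card - 1 :=
      (Finset.card_le_card hfsub).trans_eq (Finset.card_erase_of_mem hv)
    have hsum : nd G X v + (X.filter fun u => G.Adj v u).card = X.card - 1 := by omega
    have hsumR : (nd G X v : ℝ) + ((X.filter fun u => G.Adj v u).card : ℝ)
        = (X.card : ℝ) - 1 := by
      have h1 : nd G X v + (X.filter fun u => G.Adj v u).card + 1 = X.card := by omega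
      have h2 := congrArg (Nat.cast (R := ℝ)) h1
      push_cast at h2
      linarith
    have hc := hcon v hv
    push_cast at hc
    linarith
  have hk2X : ((NP G X).card : ℝ)
      < (X.card : ℝ) * ((m : ℝ) / (2 * (t:ℝ) ^ 2) * X.card - 1) := by
    have h0 : ((NP G X).card : ℝ) = ∑ v ∈ X, (nd G X v : ℝ) := by
      rw [NP_card_sum]; push_cast; rfl
    rw [h0]
    calc ∑ v ∈ X, (nd G X v : ℝ)
        < ∑ _v ∈ X, ((m : ℝ) / (2 * (t:ℝ) ^ 2) * X.card - 1) :=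
          Finset.sum_lt_sum_of_nonempty hXne hndlt
      _ = (X.card : ℝ) * ((m : ℝ) / (2 * (t:ℝ) ^ 2) * X.card - 1) := by
          rw [Finset.sum_const, nsmul_eq_mul]
  -- key bound : |NP S| < 1.6 m - 2t
  have hk2S : ((NP G S).card : ℝ) < 16 / 10 * m - 2 * t := by
    have h2t : 2 * (t : ℝ) ≤ 11 / 10 * m := by
      have h1 : (20 : ℝ) / 11 * t ≤ X.card := hX
      have h2 : (X.card : ℝ) ≤ m := by exact_mod_cast hnm
      linarith
    rcases lt_or_ge (m : ℝ) (2 * (t:ℝ) ^ 2) with hcase | hcase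
    · -- sparse case : ε < 1
      set ε : ℝ := (m : ℝ) / (2 * (t:ℝ) ^ 2) with hε
      have hεpos : 0 < ε := by positivity
      have hε1 : ε < 1 := (div_lt_one (by positivity)).2 hcase
      have hnpos : (0 : ℝ) < (X.card : ℝ) * ((X.card : ℝ) - 1) := by
        have : (2 : ℝ) ≤ X.card := by exact_mod_cast hn2
        nlinarith
      have hk2X' : ((NP G X).card : ℝ) < ε * ((X.card : ℝ) * ((X.card : ℝ) - 1)) := by
        have hn0 : (0 : ℝ) < X.card := by linarith [hn1]
        nlinarith [hk2X]
      have htt : (0 : ℝ) ≤ (t : ℝ) * ((t : ℝ) - 1) := by nlinarith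
      have hchain : ((NP G S).card : ℝ) * ((X.card : ℝ) * ((X.card : ℝ) - 1))
          ≤ ε * ((X.card : ℝ) * ((X.card : ℝ) - 1)) * ((t : ℝ) * ((t : ℝ) - 1)) := by
        calc ((NP G S).card : ℝ) * ((X.card : ℝ) * ((X.card : ℝ) - 1))
            ≤ ((NP G X).card : ℝ) * ((t : ℝ) * ((t : ℝ) - 1)) := havgR
          _ ≤ (ε * ((X.card : ℝ) * ((X.card : ℝ) - 1))) * ((t : ℝ) * ((t : ℝ) - 1)) := by
              nlinarith [hk2X']
          _ = ε * ((X.card : ℝ) * ((X.card : ℝ) - 1)) * ((t : ℝ) * ((t : ℝ) - 1)) := by ring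
      have hS2 : ((NP G S).card : ℝ) ≤ ε * ((t : ℝ) * ((t : ℝ) - 1)) := by
        have h' : ((NP G S).card : ℝ) * ((X.card:ℝ) * ((X.card:ℝ) - 1))
            ≤ (ε * ((t:ℝ) * ((t:ℝ) - 1))) * ((X.card:ℝ) * ((X.card:ℝ) - 1)) :=
          hchain.trans_eq (by ring)
        exact le_of_mul_le_mul_right h' hnpos
      have hεt2 : ε * (t:ℝ)^2 = (m : ℝ) / 2 := by
        field_simp [hε]
        rw [hε, div_mul_eq_mul_div, div_mul_eq_mul_div, div_eq_iff (by positivity)]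
        ring
      have hS3 : ((NP G S).card : ℝ) < (m : ℝ) / 2 := by
        have : ε * ((t:ℝ) * ((t:ℝ) - 1)) < ε * (t:ℝ)^2 := by nlinarith
        linarith [hS2, hεt2 ▸ this]
      linarith
    · -- dense case : 2 t² ≤ m
      have hnp := NP_card_le G S
      rw [hScard] at hnp
      have hnpR : ((NP G S).card : ℝ) ≤ (t : ℝ) * (t : ℝ) - t := by
        have htt : t ≤ t * t := Nat.le_mul_of_pos_left t (by omega)
        have h6 : (NP G S).card + t ≤ t * t := by omega
        have h7 := (Nat.cast_le (α := ℝ)).2 h6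
        push_cast at h7
        linarith
      nlinarith
  -- apply the construction
  apply hsub
  apply contains_subdivision_of_S G S hScard
  intro u v _ _ _ _
  have hCN : (8 : ℝ) / 10 * m ≤ (CN G u v).card := by
    have h1 : CN G u v = G.neighborFinset u ∩ G.neighborFinset v := by
      ext w
      simp [CN, SimpleGraph.mem_neighborFinset]
    have h2 := Finset.card_inter_add_card_union (G.neighborFinset u) (G.neighborFinset v)
    have h3 : (G.neighborFinset u ∪ G.neighborFinset v).card ≤ m :=
      hmuniv ▸ Finset.card_le_univ _
    have h4 : (G.neighborFinset u).card = G.degree u := G.card_neighborFinset_eq_degree u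
    have h5 : (G.neighborFinset v).card = G.degree v := G.card_neighborFinset_eq_degree v
    have hdu := hdeg u
    have hdv := hdeg v
    have h2R : ((CN G u v).card : ℝ) + ((G.neighborFinset u ∪ G.neighborFinset v).card : ℝ)
        = (G.degree u : ℝ) + G.degree v := by
      rw [h1]
      have h6 : (G.neighborFinset u ∩ G.neighborFinset v).card
          + (G.neighborFinset u ∪ G.neighborFinset v).card = G.degree u + G.degree v := by
        rw [h2, h4, h5]
      exact_mod_cast congrArg (Nat.cast (R := ℝ)) h6
    have h3R : ((G.neighborFinset u ∪ G.neighborFinset v).card : ℝ) ≤ m := by exact_mod_cast h3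
    linarith
  have hR : ((2 * t + (NP G S).card : ℕ) : ℝ) < ((2 * (CN G u v).card : ℕ) : ℝ) := by
    push_cast
    linarith
  exact_mod_cast hR
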